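/- Let r, s ≥ 3 be odd integers and write rs = 2k+1. If k ≢ 2 (mod 4), then the local antimagic chromatic number of FB^1(r, s) equals 3, i.e., χ_la(FB^1(r, s)) = 3. -/

import Mathlib

namespace LocalAntimagic

variable {V W : Type*}

/-- Induced vertex label: sum of edge labels over edges incident to `v`. -/
noncomputable def fplus (G : SimpleGraph V) (f : Sym2 V → ℕ) (v : V) : ℕ :=
  ∑ᶠ e ∈ G.incidenceSet v, f e

/-- `f` is a local antimagic labeling of `G`: a bijection from the edge set onto
`{1, …, q}` (`q` the number of edges) whose induced vertex labels distinguish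
adjacent vertices. -/
def IsLocalAntimagic (G : SimpleGraph V) (f : Sym2 V → ℕ) : Prop :=
  Set.BijOn f G.edgeSet (Set.Icc 1 G.edgeSet.ncard) ∧
  ∀ ⦃u w : V⦄, G.Adj u w → fplus G f u ≠ fplus G f w

/-- The local antimagic chromatic number: the least number of distinct induced
vertex labels over all local antimagic labelings. -/
noncomputable def chiLA (G : SimpleGraph V) : ℕ :=
  sInf {c : ℕ | ∃ f : Sym2 V → ℕ, IsLocalAntimagic G f ∧ (Set.range (fplus G f)).ncard = c}

/-- `n` disjoint copies of the path `P₃`; in copy `i`, vertex `(i,0) = uᵢ`,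
`(i,1) = wᵢ`, `(i,2) = vᵢ`. -/
def nP3 (n : ℕ) : SimpleGraph (Fin n × Fin 3) :=
  SimpleGraph.fromRel (fun x y => x.1 = y.1 ∧ ((x.2 = 0 ∧ y.2 = 1) ∨ (x.2 = 1 ∧ y.2 = 2)))

/-- Join of two graphs on disjoint vertex sets. -/
def joinG {α β : Type*} (G : SimpleGraph α) (H : SimpleGraph β) : SimpleGraph (α ⊕ β) :=
  SimpleGraph.fromRel (fun x y =>
    match x, y with
    | Sum.inl a, Sum.inl b => G.Adj a b
    | Sum.inr a, Sum.inr b => H.Adj a b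
    | Sum.inl _, Sum.inr _ => True
    | Sum.inr _, Sum.inl _ => False)

/-- Disjoint union of two graphs. -/
def disjUnionG {α β : Type*} (G : SimpleGraph α) (H : SimpleGraph β) : SimpleGraph (α ⊕ β) :=
  SimpleGraph.fromRel (fun x y =>
    match x, y with
    | Sum.inl a, Sum.inl b => G.Adj a b
    | Sum.inr a, Sum.inr b => H.Adj a b
    | _, _ => False)

/-- `m` disjoint copies of `G`. -/
def copies (m : ℕ) (G : SimpleGraph V) : SimpleGraph (Fin m × V) :=
  SimpleGraph.fromRel (fun x y => x.1 = y.1 ∧ G.Adj x.2 y.2)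

/-- The fan blade graph `FB(n) = nP₃ ∨ O₁`. -/
def FB (n : ℕ) : SimpleGraph ((Fin n × Fin 3) ⊕ Fin 1) :=
  joinG (nP3 n) ⊥

/-- The graph obtained from `G` by merging vertices according to `p` (fibers of
`p` are merged into single vertices). -/
def mergeMap (G : SimpleGraph V) (p : V → W) : SimpleGraph W :=
  SimpleGraph.fromRel (fun a b => ∃ x y, G.Adj x y ∧ p x = a ∧ p y = b)

/-- No two distinct vertices of `S` are adjacent or share a common neighbor. -/
def NoCommon (G : SimpleGraph V) (S : Set V) : Prop :=
  ∀ x ∈ S, ∀ y ∈ S, x ≠ y → ¬ G.Adj x y ∧ ∀ z, ¬ (G.Adj x z ∧ G.Adj y z)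

/-- `P` is a partition of the set `S` into nonempty blocks. -/
def IsPartitionOn (S : Set V) (P : Set (Set V)) : Prop :=
  (∀ B ∈ P, B ⊆ S) ∧ (∀ v ∈ S, ∃! B, B ∈ P ∧ v ∈ B) ∧ ∀ B ∈ P, B.Nonempty

/-- `p` identifies exactly the vertices lying in a common block of `P`,
and nothing else; `p` is surjective so the codomain is exactly the merged
vertex set. -/
def IsMergeOf (P : Set (Set V)) (p : V → W) : Prop :=
  Function.Surjective p ∧ ∀ x y : V, p x = p y ↔ (x = y ∨ ∃ B ∈ P, x ∈ B ∧ y ∈ B)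


/-- The diamond fan `DF(2s)`: two copies (`c = 0,1`) of `sP₃`, plus two hub
vertices `y = Sum.inr 0` and `z = Sum.inr 1`; in copy `c`, blade `j`, position
`0,2` are the degree-1 endpoints and `1` the middle vertex of the path. -/
def DF2 (s : ℕ) : SimpleGraph ((Fin 2 × Fin s × Fin 3) ⊕ Fin 2) :=
  SimpleGraph.fromRel (fun x y =>
    match x, y with
    | Sum.inl a, Sum.inl b =>
        a.1 = b.1 ∧ a.2.1 = b.2.1 ∧ ((a.2.2 = 0 ∧ b.2.2 = 1) ∨ (a.2.2 = 1 ∧ b.2.2 = 2))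
    | Sum.inl a, Sum.inr j =>
        (j = 0 ∧ ((a.1 = 0 ∧ a.2.2 ≠ 1) ∨ (a.1 = 1 ∧ a.2.2 = 1))) ∨
        (j = 1 ∧ ((a.1 = 1 ∧ a.2.2 ≠ 1) ∨ (a.1 = 0 ∧ a.2.2 = 1)))
    | _, _ => False)

abbrev DFVert (r s : ℕ) :=
  (Fin r × ((Fin 2 × Fin s × Fin 3) ⊕ Fin 2)) ⊕ ((Fin s × Fin 3) ⊕ Fin 1)

/-- Peanut graph `Pt(n)`: `Sum.inl (i, 0) = u_{i+1}`, `Sum.inl (i, 1) = v_{i+1}`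
for `0 ≤ i ≤ 2n`, and `Sum.inr 0 = x`, `Sum.inr 1 = y`. -/
abbrev PtVert (n : ℕ) := (Fin (2*n+1) × Fin 2) ⊕ Fin 2

def Pt (n : ℕ) : SimpleGraph (PtVert n) :=
  SimpleGraph.fromRel (fun a b =>
    match a, b with
    | Sum.inl p, Sum.inl q =>
        (p.2 = q.2 ∧ (p.1 : ℕ) + 1 = (q.1 : ℕ)) ∨
        (p.1 = q.1 ∧ (p.1 : ℕ) % 2 = 0 ∧ p.2 = 0 ∧ q.2 = 1)
    | Sum.inr j, Sum.inl p => (j = 0 ∧ (p.1 : ℕ) = 0) ∨ (j = 1 ∧ (p.1 : ℕ) = 2*n)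
    | _, _ => False)

/-- Triangular bracelet `TB(n)`: `Sum.inl (j, 0) = u_{2j+1}`,
`Sum.inl (j, 1) = v_{2j+1}` for `0 ≤ j ≤ n`, and `Sum.inr j = z_{2j}`. -/
abbrev TBVert (n : ℕ) := (Fin (n+1) × Fin 2) ⊕ Fin (n+1)

def TB (n : ℕ) : SimpleGraph (TBVert n) :=
  SimpleGraph.fromRel (fun a b =>
    match a, b with
    | Sum.inl p, Sum.inl q => p.1 = q.1 ∧ p.2 = 0 ∧ q.2 = 1
    | Sum.inr j, Sum.inl p =>
        (p.1 : ℕ) = (j : ℕ) ∨ (p.1 : ℕ) + 1 = (j : ℕ) ∨ ((j : ℕ) = 0 ∧ (p.1 : ℕ) = n)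
    | _, _ => False)

/-- Disjoint union of an indexed family of graphs. -/
def sigmaG {ι : Type*} {Vf : ι → Type*} (G : ∀ a, SimpleGraph (Vf a)) :
    SimpleGraph (Σ a, Vf a) :=
  SimpleGraph.fromRel (fun x y =>
    ∃ h : x.1 = y.1, (G y.1).Adj (cast (congrArg Vf h) x.2) y.2)

/-- `FB¹(r,s)`: `Sum.inl (i,j) = w_{i,j}`, `Sum.inr (Sum.inl i) = xᵢ`,
`Sum.inr (Sum.inr (j,0)) = uⱼ`, `Sum.inr (Sum.inr (j,1)) = vⱼ`. -/
def FB1 (r s : ℕ) : SimpleGraph ((Fin r × Fin s) ⊕ (Fin r ⊕ (Fin s × Fin 2))) :=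
  SimpleGraph.fromRel (fun a b =>
    match a, b with
    | Sum.inl w, Sum.inr (Sum.inl x) => w.1 = x
    | Sum.inl w, Sum.inr (Sum.inr uv) => w.2 = uv.1
    | Sum.inr (Sum.inl _), Sum.inr (Sum.inr _) => True
    | _, _ => False)

/-- `FB²(r,s)`: `Sum.inl (i,j,0) = u_{i,j}`, `Sum.inl (i,j,1) = v_{i,j}`,
`Sum.inr (Sum.inl i) = xᵢ`, `Sum.inr (Sum.inr j) = wⱼ`. -/
def FB2 (r s : ℕ) : SimpleGraph ((Fin r × Fin s × Fin 2) ⊕ (Fin r ⊕ Fin s)) :=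
  SimpleGraph.fromRel (fun a b =>
    match a, b with
    | Sum.inl uv, Sum.inr (Sum.inl x) => uv.1 = x
    | Sum.inl uv, Sum.inr (Sum.inr w) => uv.2.1 = w
    | Sum.inr (Sum.inl _), Sum.inr (Sum.inr _) => True
    | _, _ => False)


def sig (r j i : ℕ) : ℕ :=
  match j with
  | 0 => i
  | 1 => (i + (r-1)/2) % r
  | 2 => if 2*i ≤ r-1 then r-1-2*i else 2*r-1-2*i
  | j+3 => if j % 2 = 0 then i else r-1-i

lemma sig_one_eq {r i : ℕ} (hr : Odd r) (hi : i < r) :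
    sig r 1 i = if 2*i ≤ r-1 then i + (r-1)/2 else i + (r-1)/2 - r := by
  obtain ⟨h, hh⟩ := hr
  have hh2 : (r-1)/2 = h := by omega
  show (i + (r-1)/2) % r = _
  rw [hh2]
  split_ifs with hc
  · exact Nat.mod_eq_of_lt (by omega)
  · rw [Nat.mod_eq_sub_mod (by omega)]
    exact Nat.mod_eq_of_lt (by omega)

lemma sig_lt {r i : ℕ} (j : ℕ) (hr : 0 < r) (hi : i < r) : sig r j i < r := by
  match j with
  | 0 => exact hi
  | 1 => exact Nat.mod_lt _ hr
  | 2 => show (if 2*i ≤ r-1 then r-1-2*i else 2*r-1-2*i) < r; split_ifs <;> omega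
  | (j+3) => show (if j % 2 = 0 then i else r-1-i) < r; split_ifs <;> omega

lemma sig_inj {r j i1 i2 : ℕ} (hr : Odd r) (h1 : i1 < r) (h2 : i2 < r)
    (he : sig r j i1 = sig r j i2) : i1 = i2 := by
  obtain ⟨h, hh⟩ := hr
  match j with
  | 0 => exact he
  | 1 =>
    rw [sig_one_eq ⟨h, hh⟩ h1, sig_one_eq ⟨h, hh⟩ h2] at he
    have hh2 : (r-1)/2 = h := by omega
    rw [hh2] at he
    split_ifs at he <;> omega
  | 2 =>
    have e1 : sig r 2 i1 = if 2*i1 ≤ r-1 then r-1-2*i1 else 2*r-1-2*i1 := rfl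
    have e2 : sig r 2 i2 = if 2*i2 ≤ r-1 then r-1-2*i2 else 2*r-1-2*i2 := rfl
    rw [e1, e2] at he
    split_ifs at he <;> omega
  | (j+3) =>
    have e1 : sig r (j+3) i1 = if j % 2 = 0 then i1 else r-1-i1 := rfl
    have e2 : sig r (j+3) i2 = if j % 2 = 0 then i2 else r-1-i2 := rfl
    rw [e1, e2] at he
    split_ifs at he <;> omega

lemma sig_sum3 {r i : ℕ} (hr : Odd r) (hi : i < r) :
    sig r 0 i + sig r 1 i + sig r 2 i = 3 * ((r-1)/2) := by
  obtain ⟨h, hh⟩ := hr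
  rw [sig_one_eq ⟨h, hh⟩ hi]
  have e0 : sig r 0 i = i := rfl
  have e2 : sig r 2 i = if 2*i ≤ r-1 then r-1-2*i else 2*r-1-2*i := rfl
  have hh2 : (r-1)/2 = h := by omega
  rw [e0, e2, hh2]
  split_ifs <;> omega

lemma sig_sum {r s i : ℕ} (hr : Odd r) (hs : Odd s) (h3 : 3 ≤ s) (hi : i < r) :
    ∑ j ∈ Finset.range s, sig r j i = s * ((r-1)/2) := by
  obtain ⟨h, hh⟩ := hr
  have hh2 : (r-1)/2 = h := by omega
  rw [hh2]
  obtain ⟨c, hc⟩ := hs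
  obtain ⟨n, hn⟩ : ∃ n, s = 2*n+3 := ⟨c - 1, by omega⟩
  subst hn
  clear hc h3
  induction n with
  | zero =>
    rw [show (2*0+3 : ℕ) = 3 by norm_num]
    rw [Finset.sum_range_succ, Finset.sum_range_succ, Finset.sum_range_one]
    rw [sig_sum3 ⟨h, hh⟩ hi, hh2]
  | succ n ih =>
    have e1 : 2*(n+1)+3 = (2*n+3) + 1 + 1 := by ring
    rw [e1, Finset.sum_range_succ, Finset.sum_range_succ, ih]
    have hj1 : sig r (2*n+3) i = i := by
      have : 2*n+3 = (2*n) + 3 := by ring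
      rw [this]
      show (if (2*n) % 2 = 0 then i else r-1-i) = i
      simp [Nat.mul_mod_right]
    have hj2 : sig r (2*n+3+1) i = r - 1 - i := by
      have : 2*n+3+1 = (2*n+1) + 3 := by ring
      rw [this]
      show (if (2*n+1) % 2 = 0 then i else r-1-i) = r-1-i
      have : (2*n+1) % 2 = 1 := by omega
      simp [this]
    rw [hj1, hj2]
    have key : (2*n+3+1+1) * h = (2*n+3) * h + 2 * h := by ring
    rw [key]
    omega


def gam (r i j : ℕ) : ℕ := j * r + sig r j i

lemma gam_lt {r s i j : ℕ} (hr : 0 < r) (hi : i < r) (hj : j < s) : gam r i j < r * s := by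
  show j * r + sig r j i < r * s
  have h1 : sig r j i < r := sig_lt j hr hi
  have h2 : j * r + r ≤ s * r := by
    have : j + 1 ≤ s := hj
    calc j * r + r = (j+1) * r := by ring
    _ ≤ s * r := Nat.mul_le_mul_right r this
  have : r * s = s * r := Nat.mul_comm r s
  omega

lemma gam_inj {r s i1 j1 i2 j2 : ℕ} (hr : Odd r) (h1 : i1 < r) (h2 : i2 < r)
    (hj1 : j1 < s) (hj2 : j2 < s) (he : gam r i1 j1 = gam r i2 j2) : i1 = i2 ∧ j1 = j2 := by
  have hrpos : 0 < r := hr.pos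
  have s1 : sig r j1 i1 < r := sig_lt _ hrpos h1
  have s2 : sig r j2 i2 < r := sig_lt _ hrpos h2
  unfold gam at he
  have hjj : j1 = j2 := by
    have e1 : (j1 * r + sig r j1 i1) / r = j1 := by
      rw [Nat.mul_comm, Nat.mul_add_div hrpos]
      simp [Nat.div_eq_of_lt s1]
    have e2 : (j2 * r + sig r j2 i2) / r = j2 := by
      rw [Nat.mul_comm, Nat.mul_add_div hrpos]
      simp [Nat.div_eq_of_lt s2]
    rw [← e1, ← e2, he]
  subst hjj
  have : sig r j1 i1 = sig r j1 i2 := by omega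
  exact ⟨sig_inj hr h1 h2 this, rfl⟩

lemma gam_row_sum {r s i : ℕ} (hr : Odd r) (hs : Odd s) (h3 : 3 ≤ s) (hi : i < r) :
    ∑ j ∈ Finset.range s, gam r i j = s * ((r*s-1)/2) := by
  unfold gam
  rw [Finset.sum_add_distrib, sig_sum hr hs h3 hi, ← Finset.sum_mul]
  obtain ⟨ρ, hρ⟩ := hr
  obtain ⟨σ, hσ⟩ := hs
  have hgauss : ∑ j ∈ Finset.range s, j = σ * s := by
    have h2 : (∑ j ∈ Finset.range s, j) * 2 = s * (s - 1) := Finset.sum_range_id_mul_two s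
    have hs1 : s - 1 = 2*σ := by omega
    rw [hs1] at h2
    have : s * (2*σ) = (σ * s) * 2 := by ring
    rw [this] at h2
    omega
  rw [hgauss]
  have hm : r * s = 4*(ρ*σ) + 2*ρ + 2*σ + 1 := by subst hρ hσ; ring
  have h1 : (r*s-1)/2 = 2*(ρ*σ) + ρ + σ := by omega
  have h2 : (r-1)/2 = ρ := by omega
  rw [h1, h2]
  subst hρ hσ
  ring

-- the three constants
lemma consts_distinct {r s k : ℕ} (hrodd : Odd r) (hsodd : Odd s)
    (hr : 3 ≤ r) (hs : 3 ≤ s) (hk : r * s = 2 * k + 1) :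
    (9*k+6 < r*(12*k+7)) ∧ (9*k+6 < s*(17*k+10)) ∧ r*(12*k+7) ≠ s*(17*k+10) := by
  refine ⟨?_, ?_, ?_⟩
  · have : 3*(12*k+7) ≤ r*(12*k+7) := Nat.mul_le_mul_right _ hr
    omega
  · have : 3*(17*k+10) ≤ s*(17*k+10) := Nat.mul_le_mul_right _ hs
    omega
  · intro hEq
    -- doubled equation : 12 r² s + 2r = 17 r s² + 3 s
    have hdbl : 12*(r*r)*s + 2*r = 17*r*(s*s) + 3*s := by
      have h2 : 2*(r*(12*k+7)) = 2*(s*(17*k+10)) := by rw [hEq]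
      have e1 : 2*(r*(12*k+7)) = r*(12*(2*k+1)+2) := by ring
      have e2 : 2*(s*(17*k+10)) = s*(17*(2*k+1)+3) := by ring
      rw [e1, e2, ← hk] at h2
      calc 12*(r*r)*s + 2*r = r*(12*(r*s)+2) := by ring
      _ = s*(17*(r*s)+3) := h2
      _ = 17*r*(s*s) + 3*s := by ring
    have hsr : s ∣ r := by
      have hd1 : s ∣ 12*(r*r)*s + 2*r := by
        rw [hdbl]; exact ⟨17*r*s + 3, by ring⟩
      have hd2 : s ∣ 12*(r*r)*s := ⟨12*(r*r), by ring⟩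
      have hd3 : s ∣ 12*(r*r)*s + 2*r - 12*(r*r)*s := Nat.dvd_sub hd1 hd2
      have he' : 12*(r*r)*s + 2*r - 12*(r*r)*s = r * 2 := by omega
      rw [he'] at hd3
      exact (Nat.coprime_two_right.mpr hsodd).dvd_of_dvd_mul_right hd3
    obtain ⟨q, hq⟩ := hsr
    have hspos : 0 < s := by omega
    have key : 12*(s*s)*(q*q) + 2*q = 17*(s*s)*q + 3 := by
      subst hq
      have hL : 12*(s*q*(s*q))*s + 2*(s*q) = s*(12*(s*s)*(q*q) + 2*q) := by ring
      have hR : 17*(s*q)*(s*s) + 3*s = s*(17*(s*s)*q + 3) := by ring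
      rw [hL, hR] at hdbl
      exact Nat.eq_of_mul_eq_mul_left hspos hdbl
    have hq3 : q ∣ 3 := by
      have hd1 : q ∣ 12*(s*s)*(q*q) + 2*q := ⟨12*(s*s)*q + 2, by ring⟩
      have hd2 : q ∣ 17*(s*s)*q := ⟨17*(s*s), by ring⟩
      have hd3 : q ∣ 17*(s*s)*q + 3 - 17*(s*s)*q := Nat.dvd_sub (key ▸ hd1) hd2
      have he' : 17*(s*s)*q + 3 - 17*(s*s)*q = 3 := by omega
      rwa [he'] at hd3
    have hq1 : 1 ≤ q := by
      rcases Nat.eq_zero_or_pos q with h0 | h1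
      · subst h0; omega
      · exact h1
    have hq4 : q ≤ 3 := Nat.le_of_dvd (by norm_num) hq3
    interval_cases q <;> omega
abbrev FBV (r s : ℕ) := (Fin r × Fin s) ⊕ (Fin r ⊕ (Fin s × Fin 2))

def lab (r s : ℕ) : FBV r s → FBV r s → ℕ := fun a b =>
  match a, b with
  | Sum.inl w, Sum.inr (Sum.inl _) => 1 + gam r w.1 w.2
  | Sum.inr (Sum.inl _), Sum.inl w => 1 + gam r w.1 w.2
  | Sum.inl w, Sum.inr (Sum.inr uv) =>
      if uv.2 = 0 then r*s + 1 + sig (r*s) 1 (gam r w.1 w.2)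
      else 2*(r*s) + 1 + sig (r*s) 2 (gam r w.1 w.2)
  | Sum.inr (Sum.inr uv), Sum.inl w =>
      if uv.2 = 0 then r*s + 1 + sig (r*s) 1 (gam r w.1 w.2)
      else 2*(r*s) + 1 + sig (r*s) 2 (gam r w.1 w.2)
  | Sum.inr (Sum.inl x), Sum.inr (Sum.inr uv) =>
      if uv.2 = 0 then 5*(r*s) - sig (r*s) 1 (gam r x uv.1)
      else 4*(r*s) - sig (r*s) 2 (gam r x uv.1)
  | Sum.inr (Sum.inr uv), Sum.inr (Sum.inl x) =>
      if uv.2 = 0 then 5*(r*s) - sig (r*s) 1 (gam r x uv.1)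
      else 4*(r*s) - sig (r*s) 2 (gam r x uv.1)
  | _, _ => 0

lemma lab_symm (r s : ℕ) : ∀ a b, lab r s a b = lab r s b a := by
  rintro (⟨i,j⟩ | (x | ⟨j,c⟩)) (⟨i',j'⟩ | (x' | ⟨j',c'⟩)) <;> rfl

def labf (r s : ℕ) : Sym2 (FBV r s) → ℕ := Sym2.lift ⟨lab r s, lab_symm r s⟩

lemma labf_mk (r s : ℕ) (a b : FBV r s) : labf r s s(a, b) = lab r s a b := rfl

lemma incidenceSet_eq_image {V : Type*} (G : SimpleGraph V) (v : V) :
    G.incidenceSet v = (fun z => s(v, z)) '' G.neighborSet v := by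
  ext e
  constructor
  · intro he
    obtain ⟨hE, hv⟩ := he
    induction e with
    | _ x y =>
      rw [SimpleGraph.mem_edgeSet] at hE
      rcases Sym2.mem_iff.mp hv with rfl | rfl
      · exact ⟨y, hE, rfl⟩
      · exact ⟨x, hE.symm, Sym2.eq_swap⟩
  · rintro ⟨z, hz, rfl⟩
    exact ⟨(SimpleGraph.mem_edgeSet G).mpr hz, Sym2.mem_mk_left v z⟩

lemma fplus_eq_sum {V : Type*} [DecidableEq V] (G : SimpleGraph V) (f : Sym2 V → ℕ) (v : V)
    (nb : Finset V) (h : G.neighborSet v = ↑nb) :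
    fplus G f v = ∑ z ∈ nb, f s(v, z) := by
  rw [fplus, incidenceSet_eq_image, h]
  rw [show ((fun z => s(v,z)) '' ↑nb : Set (Sym2 V)) = ↑(nb.image (fun z => s(v,z))) by
    simp [Finset.coe_image]]
  rw [finsum_mem_coe_finset]
  apply Finset.sum_image
  intro x _ y _ hxy
  rcases Sym2.eq_iff.mp hxy with ⟨_, h2⟩ | ⟨h1, h2⟩
  · exact h2
  · exact h2.trans h1


variable {r s : ℕ}

lemma neighborSet_w (i : Fin r) (j : Fin s) :
    (FB1 r s).neighborSet (Sum.inl (i,j)) =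
      ↑({Sum.inr (Sum.inl i), Sum.inr (Sum.inr (j,0)), Sum.inr (Sum.inr (j,1))} :
        Finset (FBV r s)) := by
  ext b
  rcases b with ⟨i',j'⟩ | (x | ⟨j',c⟩)
  · simp [FB1, SimpleGraph.fromRel_adj]
  · simp [FB1, SimpleGraph.fromRel_adj, eq_comm]
  · fin_cases c <;> simp [FB1, SimpleGraph.fromRel_adj, eq_comm]

lemma neighborSet_x (x : Fin r) :
    (FB1 r s).neighborSet (Sum.inr (Sum.inl x)) =
      ↑((Finset.univ.image fun j : Fin s => (Sum.inl (x, j) : FBV r s)) ∪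
        (Finset.univ.image fun j : Fin s => (Sum.inr (Sum.inr (j, 0)) : FBV r s)) ∪
        (Finset.univ.image fun j : Fin s => (Sum.inr (Sum.inr (j, 1)) : FBV r s))) := by
  ext b
  rcases b with ⟨i',j'⟩ | (x' | ⟨j',c⟩)
  · simp [FB1, SimpleGraph.fromRel_adj, eq_comm]
  · simp [FB1, SimpleGraph.fromRel_adj]
  · fin_cases c <;> simp [FB1, SimpleGraph.fromRel_adj]

lemma neighborSet_uv (j : Fin s) (c : Fin 2) :
    (FB1 r s).neighborSet (Sum.inr (Sum.inr (j,c))) =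
      ↑((Finset.univ.image fun i : Fin r => (Sum.inl (i, j) : FBV r s)) ∪
        (Finset.univ.image fun i : Fin r => (Sum.inr (Sum.inl i) : FBV r s))) := by
  ext b
  rcases b with ⟨i',j'⟩ | (x' | ⟨j'',c''⟩)
  · simp [FB1, SimpleGraph.fromRel_adj, eq_comm]
  · simp [FB1, SimpleGraph.fromRel_adj]
  · simp [FB1, SimpleGraph.fromRel_adj]




variable {r s k : ℕ}

lemma lab_wx (i : Fin r) (j : Fin s) (x : Fin r) :
    labf r s s(Sum.inl (i,j), Sum.inr (Sum.inl x)) = 1 + gam r i j := rfl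

lemma lab_wu (i : Fin r) (j : Fin s) (j' : Fin s) :
    labf r s s(Sum.inl (i,j), Sum.inr (Sum.inr (j', 0))) =
      r*s + 1 + sig (r*s) 1 (gam r i j) := by
  simp [labf, lab]

lemma lab_wv (i : Fin r) (j : Fin s) (j' : Fin s) :
    labf r s s(Sum.inl (i,j), Sum.inr (Sum.inr (j', 1))) =
      2*(r*s) + 1 + sig (r*s) 2 (gam r i j) := by
  simp [labf, lab]

lemma lab_xu (x : Fin r) (j : Fin s) :
    labf r s s(Sum.inr (Sum.inl x), Sum.inr (Sum.inr (j, 0))) =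
      5*(r*s) - sig (r*s) 1 (gam r x j) := by
  simp [labf, lab]

lemma lab_xv (x : Fin r) (j : Fin s) :
    labf r s s(Sum.inr (Sum.inl x), Sum.inr (Sum.inr (j, 1))) =
      4*(r*s) - sig (r*s) 2 (gam r x j) := by
  simp [labf, lab]

section sums
variable (hrodd : Odd r) (hsodd : Odd s) (hr : 3 ≤ r) (hs : 3 ≤ s) (hk : r * s = 2 * k + 1)

include hrodd hsodd hr hs hk

lemma fplus_w (i : Fin r) (j : Fin s) :
    fplus (FB1 r s) (labf r s) (Sum.inl (i,j)) = 9*k+6 := by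
  rw [fplus_eq_sum _ _ _ _ (neighborSet_w i j)]
  rw [Finset.sum_insert (by simp), Finset.sum_insert (by simp), Finset.sum_singleton]
  rw [lab_wx, lab_wu, lab_wv]
  have hm : Odd (r*s) := hrodd.mul hsodd
  have hγ : gam r i j < r*s := gam_lt hrodd.pos i.isLt j.isLt
  have h3 := sig_sum3 hm hγ
  have e0 : sig (r*s) 0 (gam r i j) = gam r i j := rfl
  rw [e0] at h3
  omega

lemma fplus_u (j : Fin s) :
    fplus (FB1 r s) (labf r s) (Sum.inr (Sum.inr (j, 0))) = r*(12*k+7) := by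
  rw [fplus_eq_sum _ _ _ _ (neighborSet_uv j 0)]
  rw [Finset.sum_union (by simp [Finset.disjoint_left])]
  rw [Finset.sum_image (by intro a b h; simpa using h), Finset.sum_image (by intro a b h; simpa using h)]
  have key : ∀ i : Fin r,
      labf r s s(Sum.inr (Sum.inr (j, 0)), Sum.inl (i, j)) +
      labf r s s(Sum.inr (Sum.inr (j, 0)), Sum.inr (Sum.inl i)) = 6*(r*s)+1 := by
    intro i
    have e1 : labf r s s(Sum.inr (Sum.inr (j, 0)), Sum.inl (i, j)) =
        r*s + 1 + sig (r*s) 1 (gam r i j) := by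
      rw [Sym2.eq_swap]; exact lab_wu i j j
    have e2 : labf r s s(Sum.inr (Sum.inr (j, 0)), Sum.inr (Sum.inl i)) =
        5*(r*s) - sig (r*s) 1 (gam r i j) := by
      rw [Sym2.eq_swap]; exact lab_xu i j
    have hγ : gam r i j < r*s := gam_lt hrodd.pos i.isLt j.isLt
    have hp : sig (r*s) 1 (gam r i j) < r*s := sig_lt _ (by omega) hγ
    rw [e1, e2]; omega
  rw [← Finset.sum_add_distrib]
  rw [Finset.sum_congr rfl (fun i _ => key i)]
  rw [Finset.sum_const, Finset.card_univ, Fintype.card_fin, smul_eq_mul]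
  have : 6*(r*s)+1 = 12*k+7 := by omega
  rw [this]

lemma fplus_v (j : Fin s) :
    fplus (FB1 r s) (labf r s) (Sum.inr (Sum.inr (j, 1))) = r*(12*k+7) := by
  rw [fplus_eq_sum _ _ _ _ (neighborSet_uv j 1)]
  rw [Finset.sum_union (by simp [Finset.disjoint_left])]
  rw [Finset.sum_image (by intro a b h; simpa using h), Finset.sum_image (by intro a b h; simpa using h)]
  have key : ∀ i : Fin r,
      labf r s s(Sum.inr (Sum.inr (j, 1)), Sum.inl (i, j)) +
      labf r s s(Sum.inr (Sum.inr (j, 1)), Sum.inr (Sum.inl i)) = 6*(r*s)+1 := by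
    intro i
    have e1 : labf r s s(Sum.inr (Sum.inr (j, 1)), Sum.inl (i, j)) =
        2*(r*s) + 1 + sig (r*s) 2 (gam r i j) := by
      rw [Sym2.eq_swap]; exact lab_wv i j j
    have e2 : labf r s s(Sum.inr (Sum.inr (j, 1)), Sum.inr (Sum.inl i)) =
        4*(r*s) - sig (r*s) 2 (gam r i j) := by
      rw [Sym2.eq_swap]; exact lab_xv i j
    have hγ : gam r i j < r*s := gam_lt hrodd.pos i.isLt j.isLt
    have hp : sig (r*s) 2 (gam r i j) < r*s := sig_lt _ (by omega) hγ
    rw [e1, e2]; omega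
  rw [← Finset.sum_add_distrib]
  rw [Finset.sum_congr rfl (fun i _ => key i)]
  rw [Finset.sum_const, Finset.card_univ, Fintype.card_fin, smul_eq_mul]
  have : 6*(r*s)+1 = 12*k+7 := by omega
  rw [this]

lemma fplus_x (x : Fin r) :
    fplus (FB1 r s) (labf r s) (Sum.inr (Sum.inl x)) = s*(17*k+10) := by
  rw [fplus_eq_sum _ _ _ _ (neighborSet_x x)]
  rw [Finset.sum_union (by simp [Finset.disjoint_left]),
      Finset.sum_union (by simp [Finset.disjoint_left])]
  rw [Finset.sum_image (by intro a b h; simpa using h), Finset.sum_image (by intro a b h; simpa using h), Finset.sum_image (by intro a b h; simpa using h)]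
  have hm : Odd (r*s) := hrodd.mul hsodd
  have key : ∀ j : Fin s,
      (labf r s s(Sum.inr (Sum.inl x), Sum.inl (x, j)) +
       labf r s s(Sum.inr (Sum.inl x), Sum.inr (Sum.inr (j, 0)))) +
      labf r s s(Sum.inr (Sum.inl x), Sum.inr (Sum.inr (j, 1))) =
      (15*k+10) + 2 * gam r x j := by
    intro j
    have e1 : labf r s s(Sum.inr (Sum.inl x), Sum.inl (x, j)) = 1 + gam r x j := by
      rw [Sym2.eq_swap]; exact lab_wx x j x
    have hγ : gam r x j < r*s := gam_lt hrodd.pos x.isLt j.isLt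
    have h3 := sig_sum3 hm hγ
    have e0 : sig (r*s) 0 (gam r x j) = gam r x j := rfl
    rw [e0] at h3
    have hp1 : sig (r*s) 1 (gam r x j) < r*s := sig_lt _ (by omega) hγ
    have hp2 : sig (r*s) 2 (gam r x j) < r*s := sig_lt _ (by omega) hγ
    rw [e1, lab_xu, lab_xv]
    omega
  rw [← Finset.sum_add_distrib, ← Finset.sum_add_distrib]
  rw [Finset.sum_congr rfl (fun j _ => key j)]
  rw [Finset.sum_add_distrib, Finset.sum_const, Finset.card_univ, Fintype.card_fin,
    smul_eq_mul, ← Finset.mul_sum]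
  have hrow : ∑ j : Fin s, gam r x j = s * k := by
    rw [Fin.sum_univ_eq_sum_range (fun j => gam r x j)]
    rw [gam_row_sum hrodd hsodd hs x.isLt]
    congr 1
    omega
  rw [hrow]
  ring

end sums

def EFB (r s : ℕ) : Finset (Sym2 (FBV r s)) :=
  (Finset.univ.image fun p : Fin r × Fin s => s(Sum.inl p, Sum.inr (Sum.inl p.1))) ∪
  (Finset.univ.image fun p : Fin r × Fin s => s(Sum.inl p, Sum.inr (Sum.inr (p.2, 0)))) ∪
  (Finset.univ.image fun p : Fin r × Fin s => s(Sum.inl p, Sum.inr (Sum.inr (p.2, 1)))) ∪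
  (Finset.univ.image fun p : Fin r × Fin s => s(Sum.inr (Sum.inl p.1), Sum.inr (Sum.inr (p.2, 0)))) ∪
  (Finset.univ.image fun p : Fin r × Fin s => s(Sum.inr (Sum.inl p.1), Sum.inr (Sum.inr (p.2, 1))))

lemma edgeSet_eq : (FB1 r s).edgeSet = ↑(EFB r s) := by
  ext e
  induction e with
  | _ x y =>
    rw [SimpleGraph.mem_edgeSet]
    rcases x with ⟨i,j⟩ | (x | ⟨j,c⟩) <;> rcases y with ⟨i',j'⟩ | (x' | ⟨j',c'⟩) <;>
      simp [FB1, SimpleGraph.fromRel_adj, EFB, Sym2.eq_iff, Prod.ext_iff]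
    all_goals try (constructor <;> (rintro rfl; rfl))
    all_goals try (fin_cases c' <;> simp [eq_comm])
    all_goals try (fin_cases c <;> simp [eq_comm])
    all_goals tauto

lemma card_EFB : (EFB r s).card = 5*(r*s) := by
  have hc : ∀ (f : Fin r × Fin s → Sym2 (FBV r s)), Function.Injective f →
      (Finset.univ.image f).card = r*s := by
    intro f hf
    rw [Finset.card_image_of_injective _ hf, Finset.card_univ, Fintype.card_prod,
      Fintype.card_fin, Fintype.card_fin]
  have h1 : Function.Injective (fun p : Fin r × Fin s => s(Sum.inl p, (Sum.inr (Sum.inl p.1) : FBV r s))) := by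
    intro p q h; simp [Sym2.eq_iff] at h; tauto
  have h2 : Function.Injective (fun p : Fin r × Fin s => s(Sum.inl p, (Sum.inr (Sum.inr (p.2, 0)) : FBV r s))) := by
    intro p q h; simp [Sym2.eq_iff] at h; tauto
  have h3 : Function.Injective (fun p : Fin r × Fin s => s(Sum.inl p, (Sum.inr (Sum.inr (p.2, 1)) : FBV r s))) := by
    intro p q h; simp [Sym2.eq_iff] at h; tauto
  have h4 : Function.Injective (fun p : Fin r × Fin s => s((Sum.inr (Sum.inl p.1) : FBV r s), Sum.inr (Sum.inr (p.2, 0)))) := by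
    intro p q h; simp [Sym2.eq_iff, Prod.ext_iff] at h; aesop
  have h5 : Function.Injective (fun p : Fin r × Fin s => s((Sum.inr (Sum.inl p.1) : FBV r s), Sum.inr (Sum.inr (p.2, 1)))) := by
    intro p q h; simp [Sym2.eq_iff, Prod.ext_iff] at h; aesop
  rw [EFB]
  rw [Finset.card_union_of_disjoint (by simp [Finset.disjoint_left, Sym2.eq_iff]; aesop)]
  rw [Finset.card_union_of_disjoint (by simp [Finset.disjoint_left, Sym2.eq_iff]; aesop)]
  rw [Finset.card_union_of_disjoint (by simp [Finset.disjoint_left, Sym2.eq_iff]; aesop)]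
  rw [Finset.card_union_of_disjoint (by simp [Finset.disjoint_left, Sym2.eq_iff]; aesop)]
  rw [hc _ h1, hc _ h2, hc _ h3, hc _ h4, hc _ h5]
  ring

lemma edgeSet_ncard : (FB1 r s).edgeSet.ncard = 5*(r*s) := by
  rw [edgeSet_eq, Set.ncard_coe_finset, card_EFB]

lemma edge_cases {e : Sym2 (FBV r s)} (he : e ∈ (FB1 r s).edgeSet) :
    (∃ i j, e = s(Sum.inl (i,j), Sum.inr (Sum.inl i))) ∨
    (∃ i j, e = s(Sum.inl (i,j), Sum.inr (Sum.inr (j,0)))) ∨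
    (∃ i j, e = s(Sum.inl (i,j), Sum.inr (Sum.inr (j,1)))) ∨
    (∃ i j, e = s(Sum.inr (Sum.inl i), Sum.inr (Sum.inr (j,0)))) ∨
    (∃ i j, e = s(Sum.inr (Sum.inl i), Sum.inr (Sum.inr (j,1)))) := by
  rw [edgeSet_eq] at he
  simp only [EFB, Finset.coe_union, Set.mem_union, Finset.coe_image, Set.mem_image,
    Finset.coe_univ, Set.mem_univ, true_and] at he
  rcases he with (((⟨p,hp⟩|⟨p,hp⟩)|⟨p,hp⟩)|⟨p,hp⟩)|⟨p,hp⟩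
  · exact Or.inl ⟨p.1, p.2, hp.symm⟩
  · exact Or.inr (Or.inl ⟨p.1, p.2, hp.symm⟩)
  · exact Or.inr (Or.inr (Or.inl ⟨p.1, p.2, hp.symm⟩))
  · exact Or.inr (Or.inr (Or.inr (Or.inl ⟨p.1, p.2, hp.symm⟩)))
  · exact Or.inr (Or.inr (Or.inr (Or.inr ⟨p.1, p.2, hp.symm⟩)))

section bij
variable (hrodd : Odd r) (hsodd : Odd s) (hr : 3 ≤ r) (hs : 3 ≤ s) (hk : r * s = 2 * k + 1)
include hrodd hsodd hr hs hk

lemma labf_bijOn :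
    Set.BijOn (labf r s) (FB1 r s).edgeSet (Set.Icc 1 ((FB1 r s).edgeSet.ncard)) := by
  rw [edgeSet_ncard]
  have hm : Odd (r*s) := hrodd.mul hsodd
  have hmpos : 0 < r*s := hm.pos
  have hmap : Set.MapsTo (labf r s) (FB1 r s).edgeSet (Set.Icc 1 (5*(r*s))) := by
    intro e he
    rcases edge_cases he with ⟨i,j,rfl⟩|⟨i,j,rfl⟩|⟨i,j,rfl⟩|⟨i,j,rfl⟩|⟨i,j,rfl⟩ <;>
      (have hγ : gam r i j < r*s := gam_lt hrodd.pos i.isLt j.isLt) <;>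
      (have hp1 : sig (r*s) 1 (gam r i j) < r*s := sig_lt _ hmpos hγ) <;>
      (have hp2 : sig (r*s) 2 (gam r i j) < r*s := sig_lt _ hmpos hγ)
    · rw [lab_wx]; exact Set.mem_Icc.mpr (by omega)
    · rw [lab_wu]; exact Set.mem_Icc.mpr (by omega)
    · rw [lab_wv]; exact Set.mem_Icc.mpr (by omega)
    · rw [lab_xu]; exact Set.mem_Icc.mpr (by omega)
    · rw [lab_xv]; exact Set.mem_Icc.mpr (by omega)
  have hinj : Set.InjOn (labf r s) (FB1 r s).edgeSet := by
    intro e1 he1 e2 he2 hval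
    rcases edge_cases he1 with ⟨i1,j1,rfl⟩|⟨i1,j1,rfl⟩|⟨i1,j1,rfl⟩|⟨i1,j1,rfl⟩|⟨i1,j1,rfl⟩ <;>
    rcases edge_cases he2 with ⟨i2,j2,rfl⟩|⟨i2,j2,rfl⟩|⟨i2,j2,rfl⟩|⟨i2,j2,rfl⟩|⟨i2,j2,rfl⟩ <;>
    simp only [lab_wx, lab_wu, lab_wv, lab_xu, lab_xv] at hval <;>
    (have hγ1 : gam r i1 j1 < r*s := gam_lt hrodd.pos i1.isLt j1.isLt) <;>
    (have hγ2 : gam r i2 j2 < r*s := gam_lt hrodd.pos i2.isLt j2.isLt) <;>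
    (have hp11 : sig (r*s) 1 (gam r i1 j1) < r*s := sig_lt _ hmpos hγ1) <;>
    (have hp12 : sig (r*s) 2 (gam r i1 j1) < r*s := sig_lt _ hmpos hγ1) <;>
    (have hp21 : sig (r*s) 1 (gam r i2 j2) < r*s := sig_lt _ hmpos hγ2) <;>
    (have hp22 : sig (r*s) 2 (gam r i2 j2) < r*s := sig_lt _ hmpos hγ2) <;>
    (try (exfalso; omega))
    · have hg : gam r i1 j1 = gam r i2 j2 := by omega
      obtain ⟨hi, hj⟩ := gam_inj hrodd i1.isLt i2.isLt j1.isLt j2.isLt hg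
      have hi' : i1 = i2 := Fin.ext hi
      have hj' : j1 = j2 := Fin.ext hj
      subst hi' hj'; rfl
    · have hgs : sig (r*s) 1 (gam r i1 j1) = sig (r*s) 1 (gam r i2 j2) := by omega
      have hg := sig_inj hm hγ1 hγ2 hgs
      obtain ⟨hi, hj⟩ := gam_inj hrodd i1.isLt i2.isLt j1.isLt j2.isLt hg
      have hi' : i1 = i2 := Fin.ext hi
      have hj' : j1 = j2 := Fin.ext hj
      subst hi' hj'; rfl
    · have hgs : sig (r*s) 2 (gam r i1 j1) = sig (r*s) 2 (gam r i2 j2) := by omega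
      have hg := sig_inj hm hγ1 hγ2 hgs
      obtain ⟨hi, hj⟩ := gam_inj hrodd i1.isLt i2.isLt j1.isLt j2.isLt hg
      have hi' : i1 = i2 := Fin.ext hi
      have hj' : j1 = j2 := Fin.ext hj
      subst hi' hj'; rfl
    · have hgs : sig (r*s) 1 (gam r i1 j1) = sig (r*s) 1 (gam r i2 j2) := by omega
      have hg := sig_inj hm hγ1 hγ2 hgs
      obtain ⟨hi, hj⟩ := gam_inj hrodd i1.isLt i2.isLt j1.isLt j2.isLt hg
      have hi' : i1 = i2 := Fin.ext hi
      have hj' : j1 = j2 := Fin.ext hj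
      subst hi' hj'; rfl
    · have hgs : sig (r*s) 2 (gam r i1 j1) = sig (r*s) 2 (gam r i2 j2) := by omega
      have hg := sig_inj hm hγ1 hγ2 hgs
      obtain ⟨hi, hj⟩ := gam_inj hrodd i1.isLt i2.isLt j1.isLt j2.isLt hg
      have hi' : i1 = i2 := Fin.ext hi
      have hj' : j1 = j2 := Fin.ext hj
      subst hi' hj'; rfl
  have himg : labf r s '' (FB1 r s).edgeSet = Set.Icc 1 (5*(r*s)) := by
    apply Set.eq_of_subset_of_ncard_le hmap.image_subset
    · rw [Set.ncard_image_of_injOn hinj, edgeSet_ncard, ← Finset.coe_Icc,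
        Set.ncard_coe_finset, Nat.card_Icc]
      omega
  exact ⟨hmap, hinj, himg.symm.subset⟩

end bij

section final
variable (hrodd : Odd r) (hsodd : Odd s) (hr : 3 ≤ r) (hs : 3 ≤ s) (hk : r * s = 2 * k + 1)
include hrodd hsodd hr hs hk

lemma labf_adj_distinct : ∀ ⦃u w : FBV r s⦄, (FB1 r s).Adj u w →
    fplus (FB1 r s) (labf r s) u ≠ fplus (FB1 r s) (labf r s) w := by
  intro u w hadj
  obtain ⟨hab, hac, hbc⟩ := consts_distinct hrodd hsodd hr hs hk
  have he : s(u, w) ∈ (FB1 r s).edgeSet := (SimpleGraph.mem_edgeSet _).mpr hadj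
  rcases edge_cases he with ⟨i,j,hf⟩|⟨i,j,hf⟩|⟨i,j,hf⟩|⟨i,j,hf⟩|⟨i,j,hf⟩ <;>
    rcases Sym2.eq_iff.mp hf with ⟨hu, hw⟩ | ⟨hu, hw⟩ <;> subst hu hw
  · rw [fplus_w hrodd hsodd hr hs hk, fplus_x hrodd hsodd hr hs hk]; omega
  · rw [fplus_w hrodd hsodd hr hs hk, fplus_x hrodd hsodd hr hs hk]; omega
  · rw [fplus_w hrodd hsodd hr hs hk, fplus_u hrodd hsodd hr hs hk]; omega
  · rw [fplus_w hrodd hsodd hr hs hk, fplus_u hrodd hsodd hr hs hk]; omega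
  · rw [fplus_w hrodd hsodd hr hs hk, fplus_v hrodd hsodd hr hs hk]; omega
  · rw [fplus_w hrodd hsodd hr hs hk, fplus_v hrodd hsodd hr hs hk]; omega
  · rw [fplus_x hrodd hsodd hr hs hk, fplus_u hrodd hsodd hr hs hk]; exact hbc.symm
  · rw [fplus_u hrodd hsodd hr hs hk, fplus_x hrodd hsodd hr hs hk]; exact hbc
  · rw [fplus_x hrodd hsodd hr hs hk, fplus_v hrodd hsodd hr hs hk]; exact hbc.symm
  · rw [fplus_v hrodd hsodd hr hs hk, fplus_x hrodd hsodd hr hs hk]; exact hbc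

lemma range_fplus : Set.range (fplus (FB1 r s) (labf r s)) =
    {9*k+6, r*(12*k+7), s*(17*k+10)} := by
  ext y
  constructor
  · rintro ⟨v, rfl⟩
    rcases v with ⟨i,j⟩ | (x | ⟨j,c⟩)
    · rw [fplus_w hrodd hsodd hr hs hk]; left; rfl
    · rw [fplus_x hrodd hsodd hr hs hk]; right; right; rfl
    · fin_cases c
      · show fplus (FB1 r s) (labf r s) (Sum.inr (Sum.inr (j, 0))) ∈ _
        rw [fplus_u hrodd hsodd hr hs hk]; right; left; rfl
      · show fplus (FB1 r s) (labf r s) (Sum.inr (Sum.inr (j, 1))) ∈ _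
        rw [fplus_v hrodd hsodd hr hs hk]; right; left; rfl
  · have i0 : Fin r := ⟨0, by omega⟩
    have j0 : Fin s := ⟨0, by omega⟩
    rintro (rfl | rfl | rfl)
    · exact ⟨Sum.inl (i0, j0), fplus_w hrodd hsodd hr hs hk i0 j0⟩
    · exact ⟨Sum.inr (Sum.inr (j0, 0)), fplus_u hrodd hsodd hr hs hk j0⟩
    · exact ⟨Sum.inr (Sum.inl i0), fplus_x hrodd hsodd hr hs hk i0⟩

lemma range_ncard : (Set.range (fplus (FB1 r s) (labf r s))).ncard = 3 := by
  rw [range_fplus hrodd hsodd hr hs hk]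
  obtain ⟨hab, hac, hbc⟩ := consts_distinct hrodd hsodd hr hs hk
  exact Set.ncard_eq_three.mpr ⟨_, _, _, by omega, by omega, hbc, rfl⟩

lemma lower_bound {f : Sym2 (FBV r s) → ℕ}
    (hdist : ∀ ⦃u w : FBV r s⦄, (FB1 r s).Adj u w → fplus (FB1 r s) f u ≠ fplus (FB1 r s) f w) :
    3 ≤ (Set.range (fplus (FB1 r s) f)).ncard := by
  have i0 : Fin r := ⟨0, by omega⟩
  have j0 : Fin s := ⟨0, by omega⟩
  have adj1 : (FB1 r s).Adj (Sum.inl (i0,j0)) (Sum.inr (Sum.inl i0)) := by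
    simp [FB1, SimpleGraph.fromRel_adj]
  have adj2 : (FB1 r s).Adj (Sum.inl (i0,j0)) (Sum.inr (Sum.inr (j0,0))) := by
    simp [FB1, SimpleGraph.fromRel_adj]
  have adj3 : (FB1 r s).Adj (Sum.inr (Sum.inl i0)) ((Sum.inr (Sum.inr (j0,0))) : FBV r s) := by
    simp [FB1, SimpleGraph.fromRel_adj]
  set A := fplus (FB1 r s) f (Sum.inl (i0,j0))
  set C := fplus (FB1 r s) f (Sum.inr (Sum.inl i0))
  set B := fplus (FB1 r s) f (Sum.inr (Sum.inr (j0,0)))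
  have hsub : ({A, C, B} : Set ℕ) ⊆ Set.range (fplus (FB1 r s) f) := by
    rintro y (rfl | rfl | rfl)
    · exact ⟨_, rfl⟩
    · exact ⟨_, rfl⟩
    · exact ⟨_, rfl⟩
  have h3 : ({A, C, B} : Set ℕ).ncard = 3 :=
    Set.ncard_eq_three.mpr ⟨A, C, B, hdist adj1, hdist adj2, hdist adj3, rfl⟩
  rw [← h3]
  exact Set.ncard_le_ncard hsub (Set.finite_range _)

end final

/-- For odd `r, s ≥ 3` with `rs = 2k+1` and `k ≢ 2 (mod 4)`, `χ_{la}(FB¹(r,s)) = 3`. -/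
theorem chiLA_FB1 (r s k : ℕ) (hrodd : Odd r) (hsodd : Odd s)
    (hr : 3 ≤ r) (hs : 3 ≤ s) (hk : r * s = 2 * k + 1) (hkmod : k % 4 ≠ 2) :
    chiLA (FB1 r s) = 3 := by
  have h3mem : 3 ∈ {c : ℕ | ∃ f : Sym2 (FBV r s) → ℕ, IsLocalAntimagic (FB1 r s) f ∧
      (Set.range (fplus (FB1 r s) f)).ncard = c} :=
    ⟨labf r s, ⟨labf_bijOn hrodd hsodd hr hs hk, labf_adj_distinct hrodd hsodd hr hs hk⟩,
      range_ncard hrodd hsodd hr hs hk⟩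
  unfold chiLA
  refine le_antisymm (Nat.sInf_le h3mem) ?_
  apply le_csInf ⟨3, h3mem⟩
  rintro c ⟨f, hf, rfl⟩
  exact lower_bound hrodd hsodd hr hs hk hf.2

end LocalAntimagic
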